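/- For all natural numbers r and d there exist natural numbers n ≥ r and s such that for every polynomial f ∈ K[x_1,…,x_r] of total degree at most d over a field K, there exist polynomials g_1,…,g_s ∈ K[x_1,…,x_n], each of total degree at most 2, such that the projection K^n → K^r onto the first r coordinates restricts to a bijection from {y ∈ K^n : g_1(y) = ⋯ = g_s(y) = 0} onto {x ∈ K^r : f(x) = 0}. -/
import Mathlib

open MvPolynomial

namespace SkolemAux

variable (r d : ℕ)

abbrev E := Fin r → Fin (d+1)

noncomputable def ι : E r d ≃ Fin (Fintype.card (E r d)) := Fintype.equivFin _

/-- left variables -/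
noncomputable def vl (i : Fin r) : Fin (r + Fintype.card (E r d)) := Fin.castAdd _ i
/-- right variables -/
noncomputable def vr (e : E r d) : Fin (r + Fintype.card (E r d)) := Fin.natAdd r (ι r d e)

def dec (e : E r d) (i : Fin r) : E r d :=
  fun j => if j = i then ⟨(e i : ℕ) - 1, lt_of_le_of_lt (Nat.sub_le _ _) (e i).isLt⟩ else e j

lemma prod_dec {K : Type} [CommRing K] (x : Fin r → K) (e : E r d) (i : Fin r)
    (h : (e i : ℕ) ≠ 0) :
    (∏ j, x j ^ (e j : ℕ)) = x i * ∏ j, x j ^ ((dec r d e i j : ℕ)) := by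
  rw [← Finset.prod_erase_mul Finset.univ _ (Finset.mem_univ i),
      ← Finset.prod_erase_mul Finset.univ _ (Finset.mem_univ i)]
  have h1 : ∀ j ∈ Finset.univ.erase i, x j ^ ((e j : ℕ)) = x j ^ ((dec r d e i j : ℕ)) := by
    intro j hj
    simp [dec, (Finset.mem_erase.mp hj).1]
  rw [Finset.prod_congr rfl h1]
  have h2 : (e i : ℕ) = (dec r d e i i : ℕ) + 1 := by simp [dec]; omega
  rw [h2]; ring

lemma sum_dec (e : E r d) (i : Fin r) (h : (e i : ℕ) ≠ 0) :
    (∑ j, ((dec r d e i j : ℕ))) + 1 = ∑ j, (e j : ℕ) := by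
  rw [← Finset.sum_erase_add Finset.univ _ (Finset.mem_univ i),
      ← Finset.sum_erase_add Finset.univ (fun j => ((e j : ℕ))) (Finset.mem_univ i)]
  have h1 : ∀ j ∈ Finset.univ.erase i, ((dec r d e i j : ℕ)) = (e j : ℕ) := by
    intro j hj
    simp [dec, (Finset.mem_erase.mp hj).1]
  rw [Finset.sum_congr rfl h1]
  have h2 : (e i : ℕ) = (dec r d e i i : ℕ) + 1 := by simp [dec]; omega
  omega

def toE (σ : Fin r →₀ ℕ) : E r d := fun i => ⟨min (σ i) d, by omega⟩

noncomputable def G {K : Type} [CommRing K] (f : MvPolynomial (Fin r) K) :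
    (E r d × Fin r) ⊕ Fin 2 → MvPolynomial (Fin (r + Fintype.card (E r d))) K
  | .inl (e, i) =>
      if (e i : ℕ) = 0 then 0
      else X (vr r d e) - X (vl r d i) * X (vr r d (dec r d e i))
  | .inr j =>
      if j = 0 then X (vr r d (fun _ => (0 : Fin (d+1)))) - 1
      else ∑ σ ∈ f.support, C (coeff σ f) * X (vr r d (toE r d σ))

lemma G_totalDegree {K : Type} [CommRing K] [Nontrivial K] (f : MvPolynomial (Fin r) K) (j) :
    (G r d f j).totalDegree ≤ 2 := by
  match j with
  | .inl (e, i) =>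
    rw [G]
    split
    · simp
    · refine le_trans (totalDegree_sub _ _) (max_le (by simp [totalDegree_X]) ?_)
      refine le_trans (totalDegree_mul _ _) ?_
      simp [totalDegree_X]
  | .inr j =>
    rw [G]
    split
    · refine le_trans (totalDegree_sub _ _) (max_le (by simp [totalDegree_X]) (by simp))
    · refine le_trans (totalDegree_finset_sum _ _) (Finset.sup_le fun σ _ => ?_)
      refine le_trans (totalDegree_mul _ _) ?_
      simp [totalDegree_X]

lemma vr_inj (e e' : E r d) (h : vr r d e = vr r d e') : e = e' := by
  have hv : (ι r d e : ℕ) = (ι r d e' : ℕ) := by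
    have := congrArg Fin.val h
    simpa [vr, Fin.natAdd] using this
  exact (ι r d).injective (Fin.ext hv)

/-- key lemma: values at right variables are determined. -/
lemma key {K : Type} [Field K] (f : MvPolynomial (Fin r) K)
    (y : Fin (r + Fintype.card (E r d)) → K)
    (hy : ∀ j, eval y (G r d f j) = 0) (e : E r d) :
    y (vr r d e) = ∏ i, y (vl r d i) ^ (e i : ℕ) := by
  generalize hw : (∑ i, (e i : ℕ)) = w
  induction w using Nat.strong_induction_on generalizing e with
  | _ w ih =>
    rcases Nat.eq_zero_or_pos w with hw0 | hwpos
    · subst hw0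
      have he : e = fun _ => (0 : Fin (d+1)) := by
        funext i
        have : (e i : ℕ) = 0 := by
          have := Finset.sum_eq_zero_iff.mp hw i (Finset.mem_univ i)
          exact this
        exact Fin.ext this
      subst he
      have h0 := hy (.inr 0)
      simp only [G, if_pos rfl, if_true, map_sub, eval_X, map_one, sub_eq_zero] at h0
      rw [h0]
      simp
    · have : ∃ i, (e i : ℕ) ≠ 0 := by
        by_contra hc
        push_neg at hc
        have : (∑ i, (e i : ℕ)) = 0 := Finset.sum_eq_zero fun i _ => hc i
        omega
      obtain ⟨i, hi⟩ := this
      have h0 := hy (.inl (e, i))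
      simp only [G, if_neg hi, map_sub, map_mul, eval_X, sub_eq_zero] at h0
      have hsum := sum_dec r d e i hi
      have hIH := ih (∑ j, ((dec r d e i j : ℕ))) (by omega) (dec r d e i) rfl
      rw [h0, hIH]
      exact (prod_dec r d (fun i => y (vl r d i)) e i hi).symm


lemma toE_val {K : Type} [CommRing K] {f : MvPolynomial (Fin r) K} (hf : f.totalDegree ≤ d)
    {σ : Fin r →₀ ℕ} (hσ : σ ∈ f.support) (i : Fin r) : (toE r d σ i : ℕ) = σ i := by
  classical
  have h1 : σ i ≤ d := by
    have h2 : σ i ≤ σ.sum fun _ e => e := by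
      by_cases h : σ i = 0
      · simp [h]
      · exact Finset.single_le_sum (f := fun j => σ j) (fun _ _ => Nat.zero_le _)
          (Finsupp.mem_support_iff.mpr h)
    exact le_trans h2 (le_trans (le_totalDegree hσ) hf)
  simp [toE, min_eq_left h1]

lemma eval_L {K : Type} [CommRing K] {f : MvPolynomial (Fin r) K} (hf : f.totalDegree ≤ d)
    (x : Fin r → K) (y : Fin (r + Fintype.card (E r d)) → K)
    (hy : ∀ e, y (vr r d e) = ∏ i, x i ^ (e i : ℕ)) :
    eval y (∑ σ ∈ f.support, C (coeff σ f) * X (vr r d (toE r d σ))) = eval x f := by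
  rw [map_sum, eval_eq']
  refine Finset.sum_congr rfl fun σ hσ => ?_
  rw [map_mul, eval_C, eval_X, hy]
  congr 1
  exact Finset.prod_congr rfl fun i _ => by rw [toE_val r d hf hσ i]

end SkolemAux

open SkolemAux in
/-- **Skolem's trick.** For all `r`, `d` there are `n ≥ r` and `s`, depending only on
`r` and `d`, such that any polynomial of total degree at most `d` in `r` variables over
any field `K` has the same solution set, up to the bijection given by projection onto
the first `r` coordinates, as a system of `s` polynomials of total degree at most `2`
in `n` variables. -/
theorem skolem_trick_degree_two_system
    (r d : ℕ) :
    ∃ (n : ℕ) (hn : r ≤ n) (s : ℕ),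
      ∀ (K : Type) [Field K], ∀ f : MvPolynomial (Fin r) K,
        f.totalDegree ≤ d →
        ∃ g : Fin s → MvPolynomial (Fin n) K,
          (∀ j, (g j).totalDegree ≤ 2) ∧
          Set.BijOn (fun (y : Fin n → K) (i : Fin r) => y (Fin.castLE hn i))
            {y : Fin n → K | ∀ j, eval y (g j) = 0}
            {x : Fin r → K | eval x f = 0} := by
  refine ⟨r + Fintype.card (E r d), Nat.le_add_right _ _,
    Fintype.card ((E r d × Fin r) ⊕ Fin 2), ?_⟩
  intro K _ f hf
  set κ := Fintype.equivFin ((E r d × Fin r) ⊕ Fin 2) with hκ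
  refine ⟨fun j => G r d f (κ.symm j), fun j => G_totalDegree r d f _, ?_⟩
  have hn : r ≤ r + Fintype.card (E r d) := Nat.le_add_right _ _
  have hvl : ∀ i : Fin r, Fin.castLE hn i = vl r d i := fun i => rfl
  have hset : {y : Fin (r + Fintype.card (E r d)) → K |
        ∀ j, eval y ((fun j => G r d f (κ.symm j)) j) = 0}
      = {y | ∀ j, eval y (G r d f j) = 0} := by
    ext y
    constructor
    · intro h j
      simpa using h (κ j)
    · intro h j
      exact h _
  rw [hset]
  refine ⟨?_, ?_, ?_⟩
  · -- MapsTo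
    intro y hy
    simp only [Set.mem_setOf_eq] at hy ⊢
    have hk := key r d f y hy
    have h1 := hy (.inr 1)
    simp only [G, if_neg (by decide : ¬(1 : Fin 2) = 0)] at h1
    rw [eval_L r d hf (fun i => y (Fin.castLE hn i)) y (fun e => hk e)] at h1
    exact h1
  · -- InjOn
    intro y hy y' hy' hproj
    simp only [Set.mem_setOf_eq] at hy hy'
    funext v
    induction v using Fin.addCases with
    | left i => exact congrFun hproj i
    | right k =>
      have he : Fin.natAdd r k = vr r d ((ι r d).symm k) := by
        simp [vr]
      rw [he, key r d f y hy, key r d f y' hy']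
      refine Finset.prod_congr rfl fun i _ => ?_
      have hp : y (Fin.castLE hn i) = y' (Fin.castLE hn i) := congrFun hproj i
      rw [hvl i] at hp
      rw [hp]
  · -- SurjOn
    intro x hx
    simp only [Set.mem_setOf_eq] at hx
    refine ⟨Fin.addCases (motive := fun _ => K) x
      (fun k => ∏ i, x i ^ (((ι r d).symm k i : ℕ))), ?_, ?_⟩
    · set y : Fin (r + Fintype.card (E r d)) → K := Fin.addCases (motive := fun _ => K) x
        (fun k => ∏ i, x i ^ (((ι r d).symm k i : ℕ))) with hy
      have hyl : ∀ i, y (vl r d i) = x i := fun i => Fin.addCases_left i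
      have hyr : ∀ e, y (vr r d e) = ∏ i, x i ^ (e i : ℕ) := by
        intro e
        rw [vr, hy]
        rw [Fin.addCases_right]
        simp
      simp only [Set.mem_setOf_eq]
      intro j
      have : ∀ j', eval y (G r d f j') = 0 := by
        rintro (⟨e, i⟩ | j')
        · by_cases h : (e i : ℕ) = 0
          · simp [G, h]
          · simp only [G, if_neg h, map_sub, map_mul, eval_X, sub_eq_zero, hyl, hyr]
            exact prod_dec r d x e i h
        · by_cases h : j' = 0
          · subst h
            simp only [G, if_pos rfl, if_true, map_sub, eval_X, map_one, sub_eq_zero]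
            rw [hyr fun _ => 0]
            simp
          · simp only [G, if_neg h]
            rw [eval_L r d hf x y hyr]
            exact hx
      exact this _
    · funext i
      exact Fin.addCases_left i
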